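/- Let V be a real-valued potential on ℝ³ satisfying assumption (V) with exponent p < 3/2, a = |V|^{1/2}, b = |V|^{1/2} sign(V), and let Ω be a compact subset of {Im k ≥ 0}∖{0}. Set ρ_0 = (3−p)/(2p) > 1/2. Then for every 0 < ρ < min(ρ_0, 1) there is a constant C such that for all k ∈ Ω and 0 < ε < 1, ‖ b G_0(kε) a − b D_0 a − (ikε/4π) b ⊗ a ‖_{HS} ≤ C |kε|^{1+ρ}, where b D_0 a is the Hilbert–Schmidt operator with kernel b(x) a(y)/(4π|x−y|), b ⊗ a is the rank-one operator with kernel b(x) a(y), and ‖·‖_{HS} is the Hilbert–Schmidt norm. -/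

import Mathlib

open MeasureTheory Complex Filter Topology Set
open scoped ENNReal NNReal

noncomputable section

/-- Euclidean space `ℝ³`. -/
abbrev R3 := EuclideanSpace ℝ (Fin 3)

/-- Assumption (V): `⟨x⟩² V ∈ (L^p ∩ L^q)(ℝ³)` for some `p < 3/2` and `q > 3`. -/
def AssumptionV (V : R3 → ℝ) (p q : ℝ) : Prop :=
  1 ≤ p ∧ p < 3 / 2 ∧ 3 < q ∧
    MemLp (fun x => (1 + ‖x‖ ^ 2) * V x) (ENNReal.ofReal p) (volume : Measure R3) ∧
    MemLp (fun x => (1 + ‖x‖ ^ 2) * V x) (ENNReal.ofReal q) (volume : Measure R3)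

lemma exp_taylor_bd (ρ : ℝ) (h0 : 0 ≤ ρ) (h1 : ρ ≤ 1) (w : ℂ) (hw : w.re ≤ 0) :
    ‖Complex.exp w - 1 - w‖ ≤ 3 * ‖w‖ ^ (1 + ρ) := by
  rcases eq_or_ne w 0 with rfl | hw0
  · simp; positivity
  have hnw : 0 < ‖w‖ := norm_pos_iff.mpr hw0
  have hnn : (0:ℝ) ≤ ‖w‖ ^ (1+ρ) := Real.rpow_nonneg (norm_nonneg w) _
  rcases le_total ‖w‖ 1 with hle | hge
  · have h2 : ‖Complex.exp w - 1 - w‖ ≤ ‖w‖ ^ ((2:ℝ)) := by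
      have := Complex.norm_exp_sub_one_sub_id_le (x := w) hle
      rw [show ((2:ℝ)) = ((2:ℕ):ℝ) by norm_num, Real.rpow_natCast]
      simpa using this
    have h4 : ‖w‖ ^ ((2:ℝ)) ≤ ‖w‖ ^ (1+ρ) :=
      Real.rpow_le_rpow_of_exponent_ge hnw hle (by linarith : (1+ρ) ≤ 2)
    linarith
  · have he : ‖Complex.exp w‖ ≤ 1 := by
      rw [Complex.norm_exp]
      exact Real.exp_le_one_iff.mpr hw
    have h3 : ‖Complex.exp w - 1 - w‖ ≤ 3 * ‖w‖ := by
      calc ‖Complex.exp w - 1 - w‖ ≤ ‖Complex.exp w - 1‖ + ‖w‖ := norm_sub_le _ _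
        _ ≤ (‖Complex.exp w‖ + ‖(1:ℂ)‖) + ‖w‖ := by gcongr; exact norm_sub_le _ _
        _ ≤ (1 + 1) + ‖w‖ := by simp only [norm_one]; linarith
        _ ≤ 3 * ‖w‖ := by linarith
    have h4 : ‖w‖ ≤ ‖w‖ ^ (1+ρ) := by
      nth_rewrite 1 [← Real.rpow_one ‖w‖]
      exact Real.rpow_le_rpow_of_exponent_le hge (by linarith)
    linarith

lemma dist_rpow_bd (ρ : ℝ) (h0 : 0 ≤ ρ) {E : Type*} [NormedAddCommGroup E] (x y : E) :
    ‖x - y‖ ^ ρ ≤ (1 + ‖x‖^2) ^ (ρ/2) * (1 + ‖y‖^2) ^ (ρ/2) := by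
  have h1 : ‖x - y‖ ≤ ((1 + ‖x‖^2) * (1 + ‖y‖^2)) ^ ((1:ℝ)/2) := by
    have hsq : ‖x - y‖^2 ≤ (1 + ‖x‖^2) * (1 + ‖y‖^2) := by
      have := norm_sub_le x y
      nlinarith [norm_nonneg x, norm_nonneg y, norm_nonneg (x - y), sq_nonneg (‖x‖*‖y‖ - 1)]
    have h2 := Real.rpow_le_rpow (by positivity) hsq (by norm_num : (0:ℝ) ≤ 1/2)
    calc ‖x - y‖ = (‖x - y‖^2) ^ ((1:ℝ)/2) := by
          rw [← Real.rpow_natCast (‖x-y‖) 2, ← Real.rpow_mul (norm_nonneg _)]; norm_num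
      _ ≤ _ := h2
  calc ‖x - y‖ ^ ρ ≤ (((1 + ‖x‖^2) * (1 + ‖y‖^2)) ^ ((1:ℝ)/2)) ^ ρ :=
        Real.rpow_le_rpow (norm_nonneg _) h1 h0
    _ = (1 + ‖x‖^2) ^ (ρ/2) * (1 + ‖y‖^2) ^ (ρ/2) := by
        rw [← Real.rpow_mul (by positivity), one_div, inv_mul_eq_div,
          Real.mul_rpow (by positivity) (by positivity)]

lemma weight_lintegral_lt_top (V : R3 → ℝ) (hVae : AEMeasurable V (volume : Measure R3))
    (p : ℝ) (hp1 : 1 ≤ p)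
    (hf : MemLp (fun x => (1 + ‖x‖ ^ 2) * V x) (ENNReal.ofReal p) (volume : Measure R3))
    (ρ : ℝ) (hρ0 : 0 < ρ) (hρ1 : ρ < 1) (hρρ0 : ρ < (3 - p) / (2 * p)) :
    ∫⁻ x : R3, ENNReal.ofReal ((1 + ‖x‖ ^ 2) ^ ρ * |V x|) < ⊤ := by
  set f : R3 → ℝ := fun x => (1 + ‖x‖ ^ 2) * V x with hfdef
  have hfae : AEMeasurable f volume :=
    (aemeasurable_const.add (measurable_norm.pow_const 2).aemeasurable).mul hVae
  have hpos : ∀ x : R3, (0:ℝ) < 1 + ‖x‖ ^ 2 := fun x => by positivity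
  have hsplit : ∀ x : R3, ENNReal.ofReal ((1 + ‖x‖ ^ 2) ^ ρ * |V x|)
      = ENNReal.ofReal ((1 + ‖x‖ ^ 2) ^ (ρ - 1)) * ENNReal.ofReal |f x| := by
    intro x
    rw [← ENNReal.ofReal_mul (Real.rpow_nonneg (hpos x).le _)]
    congr 1
    have h1 : |f x| = (1 + ‖x‖ ^ 2) * |V x| := by
      rw [hfdef]; simp only [abs_mul, abs_of_pos (hpos x)]
    rw [h1, ← mul_assoc]
    congr 1
    rw [show ρ = (ρ - 1) + 1 by ring, Real.rpow_add (hpos x), Real.rpow_one]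
    ring_nf
  simp_rw [hsplit]
  rcases eq_or_lt_of_le hp1 with hpe | hplt
  · -- p = 1 : weight ≤ 1, f integrable
    have hint : Integrable f volume := by
      rw [← memLp_one_iff_integrable]
      convert hf
      rw [← hpe]; simp
    have hmono : ∫⁻ x : R3, ENNReal.ofReal ((1 + ‖x‖ ^ 2) ^ (ρ - 1)) * ENNReal.ofReal |f x|
        ≤ ∫⁻ x : R3, (‖f x‖₊ : ℝ≥0∞) := by
      refine lintegral_mono fun x => ?_
      rw [← enorm_eq_nnnorm, Real.enorm_eq_ofReal_abs]
      calc ENNReal.ofReal ((1 + ‖x‖ ^ 2) ^ (ρ - 1)) * ENNReal.ofReal |f x|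
          ≤ 1 * ENNReal.ofReal |f x| := by
            gcongr
            rw [show (1:ℝ≥0∞) = ENNReal.ofReal 1 by simp]
            exact ENNReal.ofReal_le_ofReal
              (Real.rpow_le_one_of_one_le_of_nonpos (by nlinarith [sq_nonneg ‖x‖]) (by linarith))
        _ = ENNReal.ofReal |f x| := one_mul _
    exact lt_of_le_of_lt hmono hint.2
  · -- 1 < p : Hölder
    set p' : ℝ := p / (p - 1) with hp'def
    have hpq : Real.HolderConjugate p p' := Real.HolderConjugate.conjExponent hplt
    have hWae : AEMeasurable (fun x : R3 => ENNReal.ofReal ((1 + ‖x‖ ^ 2) ^ (ρ - 1))) volume := by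
      fun_prop
    have hFae : AEMeasurable (fun x : R3 => ENNReal.ofReal |f x|) volume := by fun_prop
    have hHold := ENNReal.lintegral_mul_le_Lp_mul_Lq (volume : Measure R3) hpq.symm hWae hFae
    refine lt_of_le_of_lt hHold (ENNReal.mul_lt_top ?_ ?_)
    · -- weight part
      set r : ℝ := 2 * (1 - ρ) * p' with hrdef
      have hp1' : 0 < p - 1 := by linarith
      have hρ2 : 2 * p * ρ < 3 - p := by
        rw [lt_div_iff₀ (by linarith : (0:ℝ) < 2 * p)] at hρρ0; linarith
      have hp'3 : 3 < r := by
        have hr2 : r = (2 * (1 - ρ) * p) / (p - 1) := by rw [hrdef, hp'def]; ring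
        rw [hr2, lt_div_iff₀ hp1']
        nlinarith
      have hint : Integrable (fun x : R3 => (1 + ‖x‖ ^ 2) ^ (-r / 2)) (volume : Measure R3) := by
        apply integrable_rpow_neg_one_add_norm_sq
        simpa using hp'3
      have heq : ∀ x : R3, ENNReal.ofReal ((1 + ‖x‖ ^ 2) ^ (ρ - 1)) ^ p'
          = (‖(1 + ‖x‖ ^ 2) ^ (-r / 2)‖₊ : ℝ≥0∞) := by
        intro x
        rw [← enorm_eq_nnnorm, Real.enorm_eq_ofReal_abs,
          _root_.abs_of_nonneg (Real.rpow_nonneg (hpos x).le _),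
          ENNReal.ofReal_rpow_of_nonneg (Real.rpow_nonneg (hpos x).le _) hpq.symm.nonneg,
          ← Real.rpow_mul (hpos x).le]
        congr 2
        rw [hrdef]; ring
      calc (∫⁻ x : R3, ENNReal.ofReal ((1 + ‖x‖ ^ 2) ^ (ρ - 1)) ^ p') ^ (1 / p')
          = (∫⁻ x : R3, (‖(1 + ‖x‖ ^ 2) ^ (-r / 2)‖₊ : ℝ≥0∞)) ^ (1 / p') := by
            congr 1; exact lintegral_congr heq
        _ < ⊤ := ENNReal.rpow_lt_top_of_nonneg (by positivity) hint.2.ne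
    · -- f part
      have h1 : (∫⁻ x : R3, ENNReal.ofReal |f x| ^ p) ^ (1 / p)
          = eLpNorm f (ENNReal.ofReal p) volume := by
        rw [eLpNorm_eq_lintegral_rpow_enorm_toReal (by simp only [ne_eq, ENNReal.ofReal_eq_zero, not_le]; linarith) ENNReal.ofReal_ne_top,
          ENNReal.toReal_ofReal hpq.nonneg]
        simp_rw [Real.enorm_eq_ofReal_abs]
      rw [h1]
      exact hf.eLpNorm_lt_top

lemma ae_offdiag : ∀ᵐ x : R3 × R3 ∂(volume), x.1 ≠ x.2 := by
  have hs : MeasurableSet {x : R3 × R3 | x.1 = x.2} :=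
    (isClosed_eq continuous_fst continuous_snd).measurableSet
  rw [ae_iff]
  have : {x : R3 × R3 | ¬ x.1 ≠ x.2} = {x : R3 × R3 | x.1 = x.2} := by
    ext x; simp
  rw [this, Measure.volume_eq_prod, Measure.measure_prod_null hs]
  filter_upwards with x
  have : (Prod.mk x ⁻¹' {x : R3 × R3 | x.1 = x.2}) = {x} := by
    ext y; simp [eq_comm]
  rw [this]
  exact measure_singleton x

lemma ptwise_norm_bd (ρ : ℝ) (hρ0 : 0 ≤ ρ) (hρ1 : ρ ≤ 1) (z : ℂ) (hz : 0 ≤ z.im)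
    (b1 a2 r : ℝ) (hr : 0 < r) :
    ‖(b1:ℂ) * Complex.exp (Complex.I * z * (r:ℂ)) * (a2:ℂ) / (4*(Real.pi:ℂ)*(r:ℂ))
      - (b1:ℂ)*(a2:ℂ)/(4*(Real.pi:ℂ)*(r:ℂ)) - Complex.I*z/(4*(Real.pi:ℂ))*(b1:ℂ)*(a2:ℂ)‖
    ≤ 3/(4*Real.pi) * ‖z‖^(1+ρ) * (|b1| * |a2| * r^ρ) := by
  have hπ : (Real.pi:ℂ) ≠ 0 := Complex.ofReal_ne_zero.mpr Real.pi_ne_zero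
  have hrc : (r:ℂ) ≠ 0 := Complex.ofReal_ne_zero.mpr hr.ne'
  set w : ℂ := Complex.I * z * (r:ℂ) with hwdef
  have hwre : w.re ≤ 0 := by
    have : w.re = -z.im * r := by
      rw [hwdef]; simp [Complex.mul_re, Complex.mul_im]
    rw [this]
    have := mul_nonneg hz hr.le
    linarith
  have hFeq : (b1:ℂ) * Complex.exp w * (a2:ℂ) / (4*(Real.pi:ℂ)*(r:ℂ))
      - (b1:ℂ)*(a2:ℂ)/(4*(Real.pi:ℂ)*(r:ℂ)) - Complex.I*z/(4*(Real.pi:ℂ))*(b1:ℂ)*(a2:ℂ)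
      = (b1:ℂ)*(a2:ℂ)/(4*(Real.pi:ℂ)*(r:ℂ)) * (Complex.exp w - 1 - w) := by
    rw [hwdef]; field_simp
  rw [hFeq, norm_mul, norm_div, norm_mul]
  have h4πr : ‖4*(Real.pi:ℂ)*(r:ℂ)‖ = 4*Real.pi*r := by
    rw [show 4*(Real.pi:ℂ)*(r:ℂ) = ((4*Real.pi*r : ℝ):ℂ) by push_cast; ring,
      Complex.norm_real, Real.norm_eq_abs, abs_of_pos (by positivity)]
  have hnw : ‖w‖ = ‖z‖ * r := by
    rw [hwdef, norm_mul, norm_mul, Complex.norm_I, one_mul, Complex.norm_real,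
      Real.norm_eq_abs, abs_of_pos hr]
  have hE : ‖Complex.exp w - 1 - w‖ ≤ 3 * (‖z‖*r)^(1+ρ) := by
    rw [← hnw]; exact exp_taylor_bd ρ hρ0 hρ1 w hwre
  rw [h4πr, Complex.norm_real, Complex.norm_real, Real.norm_eq_abs, Real.norm_eq_abs]
  calc |b1| * |a2| / (4*Real.pi*r) * ‖Complex.exp w - 1 - w‖
      ≤ |b1| * |a2| / (4*Real.pi*r) * (3 * (‖z‖*r)^(1+ρ)) := by
        gcongr
    _ = 3/(4*Real.pi) * ‖z‖^(1+ρ) * (|b1| * |a2| * r^ρ) := by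
        rw [Real.mul_rpow (norm_nonneg z) hr.le,
          show r^(1+ρ) = r * r^ρ by rw [Real.rpow_add hr, Real.rpow_one]]
        field_simp

/-- Hilbert–Schmidt expansion of `b G₀(kε) a` near threshold: for `V`
satisfying assumption (V) with exponent `p < 3/2`, `ρ₀ = (3−p)/(2p)`, every
`0 < ρ < min(ρ₀, 1)` and compact `Ω ⊂ {Im k ≥ 0} ∖ {0}`, there is `C` such that for all
`k ∈ Ω` and `0 < ε < 1` the kernel of `b G₀(kε) a − b D₀ a − (ikε/4π) b ⊗ a` has
`L²(ℝ³×ℝ³)`-norm (= Hilbert–Schmidt norm) at most `C |kε|^{1+ρ}`. -/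
theorem expansion_of_bG0a (V : R3 → ℝ) (p q : ℝ) (hV : AssumptionV V p q)
    (a b : R3 → ℝ)
    (ha : a = fun x => Real.sqrt |V x|)
    (hb : b = fun x => Real.sqrt |V x| * Real.sign (V x))
    (Ω : Set ℂ) (hΩc : IsCompact Ω) (hΩ : ∀ k ∈ Ω, 0 ≤ k.im ∧ k ≠ 0)
    (ρ : ℝ) (hρpos : 0 < ρ) (hρ : ρ < min ((3 - p) / (2 * p)) 1) :
    ∃ C : ℝ, ∀ k ∈ Ω, ∀ ε : ℝ, 0 < ε → ε < 1 →
      eLpNorm (fun x : R3 × R3 =>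
          (b x.1 : ℂ) * Complex.exp (Complex.I * (k * (ε : ℂ)) * (‖x.1 - x.2‖ : ℝ)) * (a x.2 : ℂ)
              / (4 * (Real.pi : ℂ) * (‖x.1 - x.2‖ : ℝ))
            - (b x.1 : ℂ) * (a x.2 : ℂ) / (4 * (Real.pi : ℂ) * (‖x.1 - x.2‖ : ℝ))
            - Complex.I * (k * (ε : ℂ)) / (4 * (Real.pi : ℂ)) * (b x.1 : ℂ) * (a x.2 : ℂ))
          2 (volume : Measure (R3 × R3))
        ≤ ENNReal.ofReal (C * ‖k * (ε : ℂ)‖ ^ (1 + ρ)) := by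
  obtain ⟨hp1, hp32, hq3, hfp, hfq⟩ := hV
  rw [lt_min_iff] at hρ
  obtain ⟨hρρ0, hρ1⟩ := hρ
  -- measurability of V
  have hVae : AEMeasurable V (volume : Measure R3) := by
    have hfae : AEMeasurable (fun x : R3 => (1 + ‖x‖ ^ 2) * V x) volume :=
      hfp.aestronglyMeasurable.aemeasurable
    have hVeq : V = fun x : R3 => ((1 + ‖x‖ ^ 2) * V x) * (1 + ‖x‖ ^ 2)⁻¹ := by
      funext x
      have : (0:ℝ) < 1 + ‖x‖ ^ 2 := by positivity
      field_simp
    rw [hVeq]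
    exact hfae.mul ((measurable_const.add (measurable_norm.pow_const 2)).inv).aemeasurable
  set M : ℝ≥0∞ := ∫⁻ x : R3, ENNReal.ofReal ((1 + ‖x‖ ^ 2) ^ ρ * |V x|) with hMdef
  have hM : M < ⊤ := weight_lintegral_lt_top V hVae p hp1 hfp ρ hρpos hρ1 hρρ0
  refine ⟨3 / (4 * Real.pi) * M.toReal, fun k hk ε hε0 hε1 => ?_⟩
  set z : ℂ := k * (ε : ℂ) with hzdef
  have hzim : 0 ≤ z.im := by
    have h1 : z.im = k.im * ε := by rw [hzdef]; simp [Complex.mul_im]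
    rw [h1]
    exact mul_nonneg (hΩ k hk).1 hε0.le
  set c : ℝ := 3 / (4 * Real.pi) * ‖z‖ ^ (1 + ρ) with hcdef
  have hc0 : 0 ≤ c := by rw [hcdef]; positivity
  set h : R3 → ℝ := fun t => (1 + ‖t‖ ^ 2) ^ (ρ/2) * Real.sqrt |V t| with hhdef
  have hh0 : ∀ t, 0 ≤ h t := fun t => by rw [hhdef]; positivity
  -- a.e. pointwise bound
  have hbd : ∀ᵐ x : R3 × R3 ∂(volume), ‖(b x.1 : ℂ)
        * Complex.exp (Complex.I * z * (‖x.1 - x.2‖ : ℝ)) * (a x.2 : ℂ)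
        / (4 * (Real.pi : ℂ) * (‖x.1 - x.2‖ : ℝ))
      - (b x.1 : ℂ) * (a x.2 : ℂ) / (4 * (Real.pi : ℂ) * (‖x.1 - x.2‖ : ℝ))
      - Complex.I * z / (4 * (Real.pi : ℂ)) * (b x.1 : ℂ) * (a x.2 : ℂ)‖
      ≤ c * (h x.1 * h x.2) := by
    filter_upwards [ae_offdiag] with x hx
    have hr : 0 < ‖x.1 - x.2‖ := by
      exact norm_sub_pos_iff.mpr hx
    have hkey := ptwise_norm_bd ρ hρpos.le hρ1.le z hzim (b x.1) (a x.2) ‖x.1 - x.2‖ hr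
    refine hkey.trans ?_
    have hb1 : |b x.1| ≤ Real.sqrt |V x.1| := by
      rw [hb]
      simp only [abs_mul]
      rw [_root_.abs_of_nonneg (Real.sqrt_nonneg _)]
      have hs : |Real.sign (V x.1)| ≤ 1 := by
        rcases lt_trichotomy (V x.1) 0 with h'|h'|h' <;>
          simp [Real.sign_of_neg, Real.sign_of_pos, h']
      calc Real.sqrt |V x.1| * |Real.sign (V x.1)| ≤ Real.sqrt |V x.1| * 1 := by
            exact mul_le_mul_of_nonneg_left hs (Real.sqrt_nonneg _)
        _ = Real.sqrt |V x.1| := mul_one _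
    have ha2 : |a x.2| ≤ Real.sqrt |V x.2| := by
      rw [ha]; simpa using le_of_eq (_root_.abs_of_nonneg (Real.sqrt_nonneg |V x.2|))
    have hd := dist_rpow_bd ρ hρpos.le x.1 x.2
    calc 3/(4*Real.pi) * ‖z‖^(1+ρ) * (|b x.1| * |a x.2| * ‖x.1 - x.2‖ ^ ρ)
        ≤ 3/(4*Real.pi) * ‖z‖^(1+ρ) * (Real.sqrt |V x.1| * Real.sqrt |V x.2|
            * ((1 + ‖x.1‖^2) ^ (ρ/2) * (1 + ‖x.2‖^2) ^ (ρ/2))) := by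
          gcongr
      _ = c * (h x.1 * h x.2) := by rw [hcdef, hhdef]; ring
  -- pass from F to g
  have hle := eLpNorm_mono_ae_real (p := 2) hbd
  refine hle.trans ?_
  -- compute eLpNorm of g
  have hHae : AEMeasurable (fun t : R3 => ENNReal.ofReal (h t) ^ (2:ℝ)) volume := by
    rw [hhdef]; fun_prop
  have hg2 : eLpNorm (fun x : R3 × R3 => c * (h x.1 * h x.2)) 2 volume
      = ENNReal.ofReal c * M := by
    rw [eLpNorm_eq_lintegral_rpow_enorm_toReal (by norm_num) (by norm_num)]
    simp only [ENNReal.toReal_ofNat]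
    have hkernel : ∀ x : R3 × R3, ‖c * (h x.1 * h x.2)‖ₑ ^ (2:ℝ)
        = ENNReal.ofReal c ^ (2:ℝ)
          * (ENNReal.ofReal (h x.1) ^ (2:ℝ) * ENNReal.ofReal (h x.2) ^ (2:ℝ)) := by
      intro x
      rw [Real.enorm_eq_ofReal_abs,
        _root_.abs_of_nonneg (mul_nonneg hc0 (mul_nonneg (hh0 _) (hh0 _))),
        ENNReal.ofReal_mul hc0, ENNReal.ofReal_mul (hh0 _),
        ENNReal.mul_rpow_of_nonneg _ _ (by norm_num : (0:ℝ) ≤ 2),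
        ENNReal.mul_rpow_of_nonneg _ _ (by norm_num : (0:ℝ) ≤ 2)]
    simp_rw [hkernel]
    rw [lintegral_const_mul' _ _ (ENNReal.rpow_lt_top_of_nonneg (by norm_num) ENNReal.ofReal_ne_top).ne]
    rw [Measure.volume_eq_prod, lintegral_prod_mul hHae hHae]
    have hHM : (∫⁻ t : R3, ENNReal.ofReal (h t) ^ (2:ℝ)) = M := by
      rw [hMdef]
      refine lintegral_congr fun t => ?_
      rw [ENNReal.ofReal_rpow_of_nonneg (hh0 t) (by norm_num)]
      congr 1
      rw [hhdef]
      simp only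
      rw [Real.mul_rpow (by positivity) (Real.sqrt_nonneg _)]
      have e1 : ((1 + ‖t‖^2) ^ (ρ/2) : ℝ) ^ (2:ℝ) = (1 + ‖t‖^2) ^ ρ := by
        rw [← Real.rpow_mul (by positivity : (0:ℝ) ≤ 1 + ‖t‖^2)]
        congr 1; ring
      have e2 : (Real.sqrt |V t|) ^ (2:ℝ) = |V t| := by
        rw [show ((2:ℝ)) = ((2:ℕ):ℝ) by norm_num, Real.rpow_natCast,
          Real.sq_sqrt (abs_nonneg _)]
      rw [e1, e2]
    rw [hHM]
    have hsq : ENNReal.ofReal c ^ (2:ℝ) * (M * M) = (ENNReal.ofReal c * M) ^ (2:ℝ) := by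
      rw [ENNReal.mul_rpow_of_nonneg _ _ (by norm_num : (0:ℝ) ≤ 2)]
      congr 1
      rw [show ((2:ℝ)) = ((2:ℕ):ℝ) by norm_num, ENNReal.rpow_natCast]
      ring
    rw [hsq, ← ENNReal.rpow_mul]
    norm_num
  rw [hg2]
  -- conclude
  rw [← ENNReal.ofReal_toReal hM.ne, ← ENNReal.ofReal_mul hc0]
  apply ENNReal.ofReal_le_ofReal
  rw [hcdef]
  have : ‖z‖ = ‖k * (ε:ℂ)‖ := by rw [hzdef]
  rw [← this, ENNReal.toReal_ofReal ENNReal.toReal_nonneg]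
  exact le_of_eq (by ring)
end
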